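/- Fix J > 0 and let H_n = H_n^s + H_n^J. Then ker(H_n) equals the span of the basis states {e_t : t ∈ T_n}, where T_n is the set of strings with all letters nonzero in which no positive letter m is immediately followed by −m; in particular, dim ker(H_n) = |T_n| and the ground space of H_n is spanned by product (basis) states. -/

import Mathlib

open Finset

/-- The alphabet `Σ = {m ∈ ℤ : |m| ≤ s}`. -/
abbrev SpinLetter (s : ℕ) := {m : ℤ // m ∈ Finset.Icc (-(s : ℤ)) (s : ℤ)}

/-- Strings of length `n` over `Σ`. -/
abbrev SpinStr (s n : ℕ) := Fin n → SpinLetter s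

/-- The single-move relation `R`: exchange `0m ↔ m0` for `m ∈ Σ_*`, or
create/annihilate `00 ↔ m(−m)` for `m ∈ {1,…,s}`, at adjacent positions `k, k+1`. -/
def MoveRel (s n : ℕ) (u v : SpinStr s n) : Prop :=
  ∃ k : ℕ, ∃ hk1 : k + 1 < n,
    (∀ i : Fin n, (i : ℕ) ≠ k → (i : ℕ) ≠ k + 1 → u i = v i) ∧
    ((∃ m : ℤ, m ≠ 0 ∧ |m| ≤ (s : ℤ) ∧
        (((u ⟨k, Nat.lt_of_succ_lt hk1⟩ : ℤ) = 0 ∧ (u ⟨k + 1, hk1⟩ : ℤ) = m ∧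
          (v ⟨k, Nat.lt_of_succ_lt hk1⟩ : ℤ) = m ∧ (v ⟨k + 1, hk1⟩ : ℤ) = 0) ∨
         ((u ⟨k, Nat.lt_of_succ_lt hk1⟩ : ℤ) = m ∧ (u ⟨k + 1, hk1⟩ : ℤ) = 0 ∧
          (v ⟨k, Nat.lt_of_succ_lt hk1⟩ : ℤ) = 0 ∧ (v ⟨k + 1, hk1⟩ : ℤ) = m))) ∨
     (∃ m : ℤ, 1 ≤ m ∧ m ≤ (s : ℤ) ∧
        (((u ⟨k, Nat.lt_of_succ_lt hk1⟩ : ℤ) = 0 ∧ (u ⟨k + 1, hk1⟩ : ℤ) = 0 ∧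
          (v ⟨k, Nat.lt_of_succ_lt hk1⟩ : ℤ) = m ∧ (v ⟨k + 1, hk1⟩ : ℤ) = -m) ∨
         ((u ⟨k, Nat.lt_of_succ_lt hk1⟩ : ℤ) = m ∧ (u ⟨k + 1, hk1⟩ : ℤ) = -m ∧
          (v ⟨k, Nat.lt_of_succ_lt hk1⟩ : ℤ) = 0 ∧ (v ⟨k + 1, hk1⟩ : ℤ) = 0))))

/-- `Π_{u,v}`: the orthogonal projection onto the span of `e_u − e_v`,
as a linear operator on the full Hilbert space. -/
noncomputable def projUV (s n : ℕ) (u v : SpinStr s n) :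
    EuclideanSpace ℂ (SpinStr s n) →ₗ[ℂ] EuclideanSpace ℂ (SpinStr s n) :=
  (ℂ ∙ (EuclideanSpace.single u (1 : ℂ) - EuclideanSpace.single v (1 : ℂ))).subtype.comp
    (ℂ ∙ (EuclideanSpace.single u (1 : ℂ) -
      EuclideanSpace.single v (1 : ℂ))).orthogonalProjectionOnto.toLinearMap

/-- The Hamiltonian `H_n^s`: the sum of `Π_{u,v}` over all unordered pairs `{u,v}`
with `u R v` (realized as half the sum over ordered pairs, since `R` is symmetric
and `Π_{u,v} = Π_{v,u}`). -/
noncomputable def Hns (s n : ℕ) :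
    EuclideanSpace ℂ (SpinStr s n) →ₗ[ℂ] EuclideanSpace ℂ (SpinStr s n) :=
  letI := Classical.decPred (fun p : SpinStr s n × SpinStr s n => MoveRel s n p.1 p.2)
  (2⁻¹ : ℂ) •
    ∑ p ∈ Finset.univ.filter (fun p : SpinStr s n × SpinStr s n => MoveRel s n p.1 p.2),
      projUV s n p.1 p.2

/-- The diagonal operator `H_n^J`, acting by `H_n^J e_t = J·|{k : t_k = 0}|·e_t`. -/
noncomputable def HJop (s n : ℕ) (J : ℝ) :
    EuclideanSpace ℂ (SpinStr s n) →ₗ[ℂ] EuclideanSpace ℂ (SpinStr s n) where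
  toFun ψ := WithLp.toLp 2 fun t =>
    ((J * ((Finset.univ.filter (fun k : Fin n => (t k : ℤ) = 0)).card : ℝ) : ℝ) : ℂ) * ψ t
  map_add' ψ φ := by ext t; simp [mul_add]
  map_smul' a ψ := by ext t; simp; ring

/-- `T_n`: strings with all letters nonzero in which no positive letter `m` is
immediately followed by `−m`. -/
noncomputable def TnStr (s n : ℕ) : Finset (SpinStr s n) :=
  letI := Classical.decPred
    (fun t : SpinStr s n => (∀ i, (t i : ℤ) ≠ 0) ∧
      ∀ (i : Fin n) (h : (i : ℕ) + 1 < n),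
        ¬(0 < (t i : ℤ) ∧ (t ⟨(i : ℕ) + 1, h⟩ : ℤ) = -(t i : ℤ)))
  Finset.univ.filter
    (fun t : SpinStr s n => (∀ i, (t i : ℤ) ≠ 0) ∧
      ∀ (i : Fin n) (h : (i : ℕ) + 1 < n),
        ¬(0 < (t i : ℤ) ∧ (t ⟨(i : ℕ) + 1, h⟩ : ℤ) = -(t i : ℤ)))

open scoped InnerProductSpace ComplexConjugate

lemma inner_sub_single (s n : ℕ) (u v : SpinStr s n) (ψ : EuclideanSpace ℂ (SpinStr s n)) :
    ⟪EuclideanSpace.single u (1 : ℂ) - EuclideanSpace.single v (1 : ℂ), ψ⟫_ℂ = ψ u - ψ v := by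
  rw [inner_sub_left, EuclideanSpace.inner_single_left, EuclideanSpace.inner_single_left]
  simp

lemma norm_sq_sub_single (s n : ℕ) {u v : SpinStr s n} (huv : u ≠ v) :
    ((‖EuclideanSpace.single u (1 : ℂ) - EuclideanSpace.single v (1 : ℂ)‖ ^ 2 : ℝ) : ℂ) = 2 := by
  have h : ((‖EuclideanSpace.single u (1 : ℂ) - EuclideanSpace.single v (1 : ℂ)‖ ^ 2 : ℝ) : ℂ)
      = ⟪EuclideanSpace.single u (1 : ℂ) - EuclideanSpace.single v (1 : ℂ),
          EuclideanSpace.single u (1 : ℂ) - EuclideanSpace.single v (1 : ℂ)⟫_ℂ := by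
    rw [inner_self_eq_norm_sq_to_K]; norm_cast
  rw [h, inner_sub_single]
  have h1 : (EuclideanSpace.single u (1 : ℂ) - EuclideanSpace.single v (1 : ℂ)) u = 1 := by
    simp [EuclideanSpace.single_apply, huv]
  have h2 : (EuclideanSpace.single u (1 : ℂ) - EuclideanSpace.single v (1 : ℂ)) v = -1 := by
    simp [EuclideanSpace.single_apply, Ne.symm huv]
  rw [h1, h2]; norm_num

lemma projUV_apply (s n : ℕ) (u v : SpinStr s n) (ψ : EuclideanSpace ℂ (SpinStr s n)) :
    projUV s n u v ψ
      = ((ψ u - ψ v) /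
          ((‖EuclideanSpace.single u (1 : ℂ) - EuclideanSpace.single v (1 : ℂ)‖ ^ 2 : ℝ) : ℂ)) •
        (EuclideanSpace.single u (1 : ℂ) - EuclideanSpace.single v (1 : ℂ)) := by
  show (ℂ ∙ (EuclideanSpace.single u (1 : ℂ) - EuclideanSpace.single v (1 : ℂ))).starProjection ψ = _
  rw [Submodule.starProjection_singleton, inner_sub_single]
  norm_cast

lemma inner_projUV (s n : ℕ) {u v : SpinStr s n} (huv : u ≠ v)
    (ψ : EuclideanSpace ℂ (SpinStr s n)) :
    ⟪ψ, projUV s n u v ψ⟫_ℂ = ((Complex.normSq (ψ u - ψ v) / 2 : ℝ) : ℂ) := by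
  rw [projUV_apply, norm_sq_sub_single s n huv, inner_smul_right, ← inner_conj_symm,
    inner_sub_single]
  push_cast
  rw [← Complex.mul_conj]
  ring

lemma moveRel_ne {s n : ℕ} {u v : SpinStr s n} (h : MoveRel s n u v) : u ≠ v := by
  rintro rfl
  obtain ⟨k, hk1, -, hcase⟩ := h
  rcases hcase with ⟨m, hm0, -, hc⟩ | ⟨m, hm1, -, hc⟩
  · rcases hc with ⟨h1, -, h3, -⟩ | ⟨-, h2, -, h4⟩ <;> omega
  · rcases hc with ⟨h1, -, h3, -⟩ | ⟨h1, -, h3, -⟩ <;> omega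

lemma mem_TnStr {s n : ℕ} {t : SpinStr s n} :
    t ∈ TnStr s n ↔ ((∀ i, (t i : ℤ) ≠ 0) ∧
      ∀ (i : Fin n) (h : (i : ℕ) + 1 < n),
        ¬(0 < (t i : ℤ) ∧ (t ⟨(i : ℕ) + 1, h⟩ : ℤ) = -(t i : ℤ))) := by
  simp [TnStr, Finset.mem_filter]

/-- A string in `T_n` is never an endpoint of a move. -/
lemma tn_not_endpoint {s n : ℕ} {t u v : SpinStr s n} (ht : t ∈ TnStr s n)
    (h : MoveRel s n u v) : t ≠ u ∧ t ≠ v := by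
  rw [mem_TnStr] at ht
  obtain ⟨hnz, hnd⟩ := ht
  obtain ⟨k, hk1, -, hcase⟩ := h
  have hkn : k < n := Nat.lt_of_succ_lt hk1
  constructor
  · rintro rfl
    rcases hcase with ⟨m, hm0, -, hc⟩ | ⟨m, hm1, -, hc⟩
    · rcases hc with ⟨h1, -⟩ | ⟨-, h2, -⟩
      · exact hnz ⟨k, hkn⟩ h1
      · exact hnz ⟨k + 1, hk1⟩ h2
    · rcases hc with ⟨h1, -⟩ | ⟨h1, h2, -⟩
      · exact hnz ⟨k, hkn⟩ h1
      · exact hnd ⟨k, hkn⟩ hk1 ⟨by omega, by rw [h2, h1]⟩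
  · rintro rfl
    rcases hcase with ⟨m, hm0, -, hc⟩ | ⟨m, hm1, -, hc⟩
    · rcases hc with ⟨-, -, -, h4⟩ | ⟨-, -, h3, -⟩
      · exact hnz ⟨k + 1, hk1⟩ h4
      · exact hnz ⟨k, hkn⟩ h3
    · rcases hc with ⟨-, -, h3, h4⟩ | ⟨-, -, h3, -⟩
      · exact hnd ⟨k, hkn⟩ hk1 ⟨by omega, by rw [h4, h3]⟩
      · exact hnz ⟨k, hkn⟩ h3

lemma ker_support {s n : ℕ} {J : ℝ} (hJ : 0 < J) {ψ : EuclideanSpace ℂ (SpinStr s n)}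
    (hψ : (Hns s n + HJop s n J) ψ = 0) :
    (∀ u v : SpinStr s n, MoveRel s n u v → ψ u = ψ v) ∧
    (∀ t : SpinStr s n, (∃ k, (t k : ℤ) = 0) → ψ t = 0) := by
  classical
  have hinner : ⟪ψ, (Hns s n + HJop s n J) ψ⟫_ℂ = 0 := by rw [hψ]; simp
  rw [LinearMap.add_apply, inner_add_right] at hinner
  simp only [Hns, Finset.filter_congr_decidable, LinearMap.smul_apply, LinearMap.sum_apply,
    inner_smul_right, inner_sum] at hinner
  set F := Finset.univ.filter (fun p : SpinStr s n × SpinStr s n => MoveRel s n p.1 p.2) with hF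
  have hsum1 : ∑ p ∈ F, ⟪ψ, projUV s n p.1 p.2 ψ⟫_ℂ
      = ((∑ p ∈ F, Complex.normSq (ψ p.1 - ψ p.2) / 2 : ℝ) : ℂ) := by
    rw [Complex.ofReal_sum]
    exact Finset.sum_congr rfl fun p hp =>
      inner_projUV s n (moveRel_ne (Finset.mem_filter.mp hp).2) ψ
  have hsum2 : ⟪ψ, HJop s n J ψ⟫_ℂ
      = ((∑ t : SpinStr s n, J * ((Finset.univ.filter (fun k : Fin n => (t k : ℤ) = 0)).card : ℝ)
            * Complex.normSq (ψ t) : ℝ) : ℂ) := by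
    rw [PiLp.inner_apply]
    push_cast
    refine Finset.sum_congr rfl fun t _ => ?_
    have happ : (HJop s n J ψ) t
        = ((J * ((Finset.univ.filter (fun k : Fin n => (t k : ℤ) = 0)).card : ℝ) : ℝ) : ℂ) * ψ t :=
      rfl
    rw [RCLike.inner_apply, happ]
    rw [show (((J * ((Finset.univ.filter (fun k : Fin n => (t k : ℤ) = 0)).card : ℝ) : ℝ) : ℂ) * ψ t)
          * (starRingEnd ℂ) (ψ t)
        = ((J * ((Finset.univ.filter (fun k : Fin n => (t k : ℤ) = 0)).card : ℝ) : ℝ) : ℂ)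
          * (ψ t * (starRingEnd ℂ) (ψ t)) from by ring, Complex.mul_conj]
    push_cast
    ring
  rw [hsum1, hsum2] at hinner
  set S1 : ℝ := ∑ p ∈ F, Complex.normSq (ψ p.1 - ψ p.2) / 2 with hS1def
  set S2 : ℝ := ∑ t : SpinStr s n,
    J * ((Finset.univ.filter (fun k : Fin n => (t k : ℤ) = 0)).card : ℝ) * Complex.normSq (ψ t)
    with hS2def
  have hr : ((2⁻¹ * S1 + S2 : ℝ) : ℂ) = 0 := by push_cast; rw [← hinner]
  have hr' : 2⁻¹ * S1 + S2 = 0 := by exact_mod_cast hr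
  have hS1nn : 0 ≤ S1 := Finset.sum_nonneg fun p _ => div_nonneg (Complex.normSq_nonneg _) (by norm_num)
  have hS2nn : 0 ≤ S2 := Finset.sum_nonneg fun t _ =>
    mul_nonneg (mul_nonneg hJ.le (Nat.cast_nonneg _)) (Complex.normSq_nonneg _)
  have hS1 : S1 = 0 := by linarith
  have hS2 : S2 = 0 := by linarith
  have hmove := (Finset.sum_eq_zero_iff_of_nonneg fun p _ => div_nonneg (Complex.normSq_nonneg _) (by norm_num)).mp hS1
  have hzero := (Finset.sum_eq_zero_iff_of_nonneg fun t _ =>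
    mul_nonneg (mul_nonneg hJ.le (Nat.cast_nonneg _)) (Complex.normSq_nonneg _)).mp hS2
  constructor
  · intro u v h
    have hp : (u, v) ∈ F := Finset.mem_filter.mpr ⟨Finset.mem_univ _, h⟩
    have h0 := hmove _ hp
    have : Complex.normSq (ψ u - ψ v) = 0 := by
      simpa using h0
    exact sub_eq_zero.mp (Complex.normSq_eq_zero.mp this)
  · rintro t ⟨k, hk⟩
    have hc : 0 < ((Finset.univ.filter (fun k : Fin n => (t k : ℤ) = 0)).card : ℝ) := by
      have : 0 < (Finset.univ.filter (fun k : Fin n => (t k : ℤ) = 0)).card :=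
        Finset.card_pos.mpr ⟨k, Finset.mem_filter.mpr ⟨Finset.mem_univ _, hk⟩⟩
      exact_mod_cast this
    have h0 := hzero t (Finset.mem_univ t)
    have hpos : 0 < J * ((Finset.univ.filter (fun k : Fin n => (t k : ℤ) = 0)).card : ℝ) :=
      mul_pos hJ hc
    have : Complex.normSq (ψ t) = 0 := (mul_eq_zero.mp h0).resolve_left (ne_of_gt hpos)
    exact Complex.normSq_eq_zero.mp this

theorem stmt_15 (s n : ℕ) (hs : 1 ≤ s) (hn : 1 ≤ n) (J : ℝ) (hJ : 0 < J) :
    LinearMap.ker (Hns s n + HJop s n J)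
      = Submodule.span ℂ {φ : EuclideanSpace ℂ (SpinStr s n) |
          ∃ t ∈ TnStr s n, φ = EuclideanSpace.single t (1 : ℂ)} ∧
    Module.finrank ℂ (LinearMap.ker (Hns s n + HJop s n J)) = (TnStr s n).card := by
  classical
  have hspan : LinearMap.ker (Hns s n + HJop s n J)
      = Submodule.span ℂ {φ : EuclideanSpace ℂ (SpinStr s n) |
          ∃ t ∈ TnStr s n, φ = EuclideanSpace.single t (1 : ℂ)} := by
    apply le_antisymm
    · intro ψ hψ
      obtain ⟨hmv, hz⟩ := ker_support hJ (LinearMap.mem_ker.mp hψ)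
      have hsupp : ∀ t, t ∉ TnStr s n → ψ t = 0 := by
        intro t ht
        rw [mem_TnStr] at ht
        by_cases hA : ∀ i, (t i : ℤ) ≠ 0
        · have hB : ¬ ∀ (i : Fin n) (h : (i : ℕ) + 1 < n),
              ¬(0 < (t i : ℤ) ∧ (t ⟨(i : ℕ) + 1, h⟩ : ℤ) = -(t i : ℤ)) := fun hB => ht ⟨hA, hB⟩
          push_neg at hB
          obtain ⟨j, hj, hpos, heq⟩ := hB
          set z0 : SpinLetter s := ⟨0, by simp⟩ with hz0
          set u : SpinStr s n :=
            fun i => if (i : ℕ) = (j : ℕ) ∨ (i : ℕ) = (j : ℕ) + 1 then z0 else t i with hu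
          have hjlt : ((j : ℕ) : ℕ) < n := Nat.lt_of_succ_lt hj
          have hmove : MoveRel s n u t := by
            refine ⟨(j : ℕ), hj, ?_, Or.inr ⟨(t j : ℤ), by omega,
              (Finset.mem_Icc.mp (t j).2).2, Or.inl ⟨?_, ?_, ?_, ?_⟩⟩⟩
            · intro i hi1 hi2
              simp [hu, hi1, hi2]
            · show ((u ⟨(j : ℕ), hjlt⟩ : SpinLetter s) : ℤ) = 0
              simp [hu, hz0]
            · show ((u ⟨(j : ℕ) + 1, hj⟩ : SpinLetter s) : ℤ) = 0
              simp [hu, hz0]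
            · show ((t ⟨(j : ℕ), hjlt⟩ : SpinLetter s) : ℤ) = (t j : ℤ)
              rfl
            · exact heq
          have hu0 : ψ u = 0 := hz u ⟨⟨(j : ℕ), hjlt⟩, by simp [hu, hz0]⟩
          rw [← hmv u t hmove, hu0]
        · push_neg at hA
          obtain ⟨i, hi⟩ := hA
          exact hz t ⟨i, hi⟩
      have h1 : ψ = ∑ t : SpinStr s n, ψ t • EuclideanSpace.single t (1 : ℂ) := by
        ext i
        rw [WithLp.ofLp_sum, Finset.sum_apply]
        simp [EuclideanSpace.single_apply]
      have hdecomp : ψ = ∑ t ∈ TnStr s n, ψ t • EuclideanSpace.single t (1 : ℂ) :=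
        h1.trans (Finset.sum_subset (Finset.subset_univ _)
          fun t _ ht => by rw [hsupp t ht, zero_smul]).symm
      rw [hdecomp]
      exact Submodule.sum_mem _ fun t ht =>
        Submodule.smul_mem _ _ (Submodule.subset_span ⟨t, ht, rfl⟩)
    · rw [Submodule.span_le]
      rintro φ ⟨t, ht, rfl⟩
      rw [SetLike.mem_coe, LinearMap.mem_ker, LinearMap.add_apply]
      have hHns : Hns s n (EuclideanSpace.single t (1 : ℂ)) = 0 := by
        simp only [Hns, Finset.filter_congr_decidable, LinearMap.smul_apply, LinearMap.sum_apply]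
        rw [Finset.sum_eq_zero, smul_zero]
        intro p hp
        obtain ⟨h1, h2⟩ := tn_not_endpoint ht (Finset.mem_filter.mp hp).2
        rw [projUV_apply]
        have e1 : (EuclideanSpace.single t (1 : ℂ)) p.1 = 0 := by
          simp only [EuclideanSpace.single_apply, if_neg (Ne.symm h1)]
        have e2 : (EuclideanSpace.single t (1 : ℂ)) p.2 = 0 := by
          simp only [EuclideanSpace.single_apply, if_neg (Ne.symm h2)]
        rw [e1, e2]
        simp
      have hHJ : HJop s n J (EuclideanSpace.single t (1 : ℂ)) = 0 := by
        have hzt : (Finset.univ.filter (fun k : Fin n => (t k : ℤ) = 0)) = ∅ := by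
          rw [Finset.filter_eq_empty_iff]
          intro k _
          exact (mem_TnStr.mp ht).1 k
        ext i
        have happ : (HJop s n J (EuclideanSpace.single t (1 : ℂ))) i
            = ((J * ((Finset.univ.filter (fun k : Fin n => (i k : ℤ) = 0)).card : ℝ) : ℝ) : ℂ)
              * (EuclideanSpace.single t (1 : ℂ)) i := rfl
        rw [happ]
        by_cases hit : i = t
        · subst hit
          rw [hzt]
          simp
        · have : (EuclideanSpace.single t (1 : ℂ)) i = 0 := by
            simp only [EuclideanSpace.single_apply, if_neg hit]
          rw [this, mul_zero]
          rfl
      rw [hHns, hHJ, add_zero]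
  refine ⟨hspan, ?_⟩
  rw [hspan]
  have hrange : Set.range
        (fun t : {x // x ∈ TnStr s n} => EuclideanSpace.single (t : SpinStr s n) (1 : ℂ))
      = {φ : EuclideanSpace ℂ (SpinStr s n) | ∃ t ∈ TnStr s n,
          φ = EuclideanSpace.single t (1 : ℂ)} := by
    ext φ
    constructor
    · rintro ⟨⟨t, ht⟩, rfl⟩
      exact ⟨t, ht, rfl⟩
    · rintro ⟨t, ht, rfl⟩
      exact ⟨⟨t, ht⟩, rfl⟩
  have hli : LinearIndependent ℂ
      (fun t : {x // x ∈ TnStr s n} => EuclideanSpace.single (t : SpinStr s n) (1 : ℂ)) :=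
    ((EuclideanSpace.orthonormal_single (𝕜 := ℂ)
      (ι := SpinStr s n)).linearIndependent).comp _ Subtype.val_injective
  rw [← hrange, finrank_span_eq_card hli, Fintype.card_coe]
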